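/- Consider a billiard trajectory inside a cone with vertex at the origin, with p k and p (k+1) linearly independent for every k, and assume additionally that p 0 and v 0 are linearly independent; set R := √(‖p 0‖² − ⟨p 0, v 0⟩²) > 0 (the distance from the first line of the trajectory to the origin). Assume the last coordinate of each p k is positive, set q k := ((p k)ₙ)⁻¹ • p k, and assume there is a > 0 with ‖q k‖ ≤ a for all k. Let α := lim α k (which exists by part 1 of Lemma 2.3). Then: (i) sin(α k) · ‖p k‖ = R for every k; (ii) if α > 0 then the sequence (p k) converges to some point p ∈ ℝⁿ with p ≠ 0; (iii) if α = 0 then ‖p k‖ → +∞. (Lemma 2.3, part 4.) -/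

import Mathlib

open InnerProductGeometry RealInnerProductSpace Filter

/-- Lemma 2.3, part 4: with `R` the (positive) distance from the first line of
the trajectory to the origin and `α` the limit of the angles `α k`, one has
`sin (α k) · ‖p k‖ = R` for all `k`; if `α > 0` the reflection points converge
to a nonzero point, and if `α = 0` then `‖p k‖ → ∞`. -/
theorem billiard_cone_p_limit {n : ℕ} (hn : 2 ≤ n)
    (p ν v : ℕ → EuclideanSpace ℝ (Fin n))
    (hp0 : ∀ k, p k ≠ 0) (hpne : ∀ k, p (k + 1) ≠ p k)
    (hν : ∀ k, ‖ν k‖ = 1) (hνp : ∀ k, ⟪ν k, p k⟫ = 0)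
    (hv : ∀ k, v k = ‖p (k + 1) - p k‖⁻¹ • (p (k + 1) - p k))
    (hrefl : ∀ k, v (k + 1) = v k - (2 * ⟪v k, ν (k + 1)⟫) • ν (k + 1))
    (hvν : ∀ k, 0 < ⟪v k, ν k⟫)
    (hli : ∀ k, LinearIndependent ℝ ![p k, p (k + 1)])
    (hli0 : LinearIndependent ℝ ![p 0, v 0])
    (R : ℝ) (hR : R = Real.sqrt (‖p 0‖ ^ 2 - ⟪p 0, v 0⟫ ^ 2))
    (hlast : ∀ k, 0 < p k ⟨n - 1, by omega⟩)
    (q : ℕ → EuclideanSpace ℝ (Fin n))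
    (hq : ∀ k, q k = (p k ⟨n - 1, by omega⟩)⁻¹ • p k)
    (a : ℝ) (ha : 0 < a) (hqa : ∀ k, ‖q k‖ ≤ a)
    (α : ℕ → ℝ) (hα : ∀ k, α k = angle (v k) (p k))
    (αl : ℝ) (hαl : Tendsto α atTop (nhds αl)) :
    0 < R ∧ (∀ k, Real.sin (α k) * ‖p k‖ = R) ∧
      (0 < αl → ∃ plim : EuclideanSpace ℝ (Fin n),
        plim ≠ 0 ∧ Tendsto p atTop (nhds plim)) ∧
      (αl = 0 → Tendsto (fun k => ‖p k‖) atTop atTop) := by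
  have hΔ : ∀ k, p (k + 1) - p k ≠ 0 := fun k => sub_ne_zero.mpr (hpne k)
  set e : ℕ → ℝ := fun k => ‖p (k + 1) - p k‖ with he
  have he_pos : ∀ k, 0 < e k := fun k => norm_pos_iff.mpr (hΔ k)
  have hvnorm : ∀ k, ‖v k‖ = 1 := by
    intro k
    rw [hv k, norm_smul, norm_inv, norm_norm, inv_mul_cancel₀ (he_pos k).ne']
  set c : ℕ → ℝ := fun k => ⟪p k, v k⟫ with hc
  have hcdef : ∀ k, c k = ⟪p k, v k⟫ := fun _ => rfl
  have hstep : ∀ k, p (k + 1) = p k + e k • v k := by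
    intro k
    rw [hv k, smul_smul, mul_inv_cancel₀ (he_pos k).ne', one_smul]
    abel
  have hvv : ∀ k, ⟪v k, v k⟫ = 1 := by
    intro k
    rw [real_inner_self_eq_norm_sq, hvnorm k]; norm_num
  have hckey : ∀ k, c (k + 1) = c k + e k := by
    intro k
    have h1 : ⟪p (k + 1), v (k + 1)⟫ = ⟪p (k + 1), v k⟫ := by
      rw [hrefl k, inner_sub_right, real_inner_smul_right,
        real_inner_comm (ν (k + 1)) (p (k + 1)), hνp (k + 1)]
      ring
    have h2 : ⟪p (k + 1), v k⟫ = c k + e k := by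
      conv_lhs => rw [hstep k]
      rw [inner_add_left, real_inner_smul_left, hvv k, mul_one, ← hcdef k]
    show ⟪p (k + 1), v (k + 1)⟫ = c k + e k
    rw [h1, h2]
  -- the invariant
  have hcs0 : ⟪p 0, v 0⟫ ^ 2 < ‖p 0‖ ^ 2 := by
    have h1 : ⟪p 0, v 0⟫ < ‖p 0‖ * ‖v 0‖ := by
      rw [inner_lt_norm_mul_iff_real]
      intro h
      obtain ⟨hA, hB⟩ := (LinearIndependent.pair_iff.1 hli0) ‖v 0‖ (-‖p 0‖)
        (by rw [neg_smul, ← h]; abel)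
      exact (hp0 0) (norm_eq_zero.mp (by simpa using hB))
    have h2 : ⟪p 0, -v 0⟫ < ‖p 0‖ * ‖-v 0‖ := by
      rw [inner_lt_norm_mul_iff_real]
      intro h
      rw [smul_neg] at h
      obtain ⟨hA, hB⟩ := (LinearIndependent.pair_iff.1 hli0) ‖-v 0‖ ‖p 0‖
        (by rw [← neg_eq_iff_eq_neg.mpr h]; abel)
      exact (hp0 0) (norm_eq_zero.mp (by simpa using hB))
    rw [norm_neg, inner_neg_right] at h2
    rw [hvnorm 0, mul_one] at h1 h2
    nlinarith
  have hRsq : R ^ 2 = ‖p 0‖ ^ 2 - ⟪p 0, v 0⟫ ^ 2 := by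
    rw [hR, Real.sq_sqrt (by nlinarith)]
  have hR0 : 0 ≤ R := hR ▸ Real.sqrt_nonneg _
  have hRpos : 0 < R := by
    rcases hR0.lt_or_eq with h | h
    · exact h
    · exfalso; nlinarith
  have hD : ∀ k, ‖p k‖ ^ 2 - c k ^ 2 = R ^ 2 := by
    intro k
    induction k with
    | zero => rw [hRsq]
    | succ k ih =>
      have hn1 : ‖p (k + 1)‖ ^ 2 = ‖p k‖ ^ 2 + 2 * (e k * c k) + e k ^ 2 := by
        conv_lhs => rw [hstep k]
        rw [norm_add_sq_real, real_inner_smul_right, norm_smul, hvnorm k]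
        simp only [Real.norm_eq_abs, mul_one, mul_pow, sq_abs]
        rfl
      rw [hn1, hckey k]
      linear_combination ih
  have hnpos : ∀ k, 0 < ‖p k‖ := fun k => norm_pos_iff.mpr (hp0 k)
  -- sin (α k) * ‖p k‖ = R
  have hsin : ∀ k, Real.sin (α k) * ‖p k‖ = R := by
    intro k
    have h := sin_angle_mul_norm_mul_norm (v k) (p k)
    rw [hvnorm k, one_mul, hvv k, one_mul, real_inner_self_eq_norm_sq,
      real_inner_comm (p k) (v k), ← hcdef k] at h
    rw [hα k, h, ← pow_two, hD k, Real.sqrt_sq hR0]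
  have hsinpos : ∀ k, 0 < Real.sin (α k) := by
    intro k
    have h := hsin k
    nlinarith [hnpos k]
  have hnorm_eq : ∀ k, ‖p k‖ = R / Real.sin (α k) := by
    intro k
    rw [eq_div_iff (hsinpos k).ne']
    linarith [hsin k]
  have hcos : ∀ k, c k = ‖p k‖ * Real.cos (α k) := by
    intro k
    have h := cos_angle_mul_norm_mul_norm (v k) (p k)
    rw [hvnorm k, one_mul, real_inner_comm (p k) (v k), ← hcdef k] at h
    rw [hα k, ← h]; ring
  have hcmono : Monotone c := monotone_nat_of_le_succ fun k => by
    rw [hckey k]; linarith [he_pos k]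
  -- the αl = 0 / αl = π divergence machinery
  have hdiverge : Real.sin αl = 0 → Tendsto (fun k => ‖p k‖) atTop atTop := by
    intro hs0
    have hst : Tendsto (fun k => Real.sin (α k)) atTop (nhds 0) := by
      have := (Real.continuous_sin.tendsto αl).comp hαl
      rwa [hs0] at this
    have hst' : Tendsto (fun k => Real.sin (α k)) atTop (nhdsWithin 0 (Set.Ioi 0)) :=
      tendsto_nhdsWithin_of_tendsto_nhds_of_eventually_within _ hst
        (Filter.Eventually.of_forall fun k => hsinpos k)
    have hinv : Tendsto (fun k => (Real.sin (α k))⁻¹) atTop atTop :=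
      tendsto_inv_nhdsGT_zero.comp hst'
    have := hinv.const_mul_atTop hRpos
    refine this.congr fun k => ?_
    rw [hnorm_eq k, div_eq_mul_inv]
  refine ⟨hRpos, hsin, ?_, ?_⟩
  · -- 0 < αl : convergence
    intro hαl0
    have hαl_le_pi : αl ≤ Real.pi :=
      le_of_tendsto hαl (Filter.Eventually.of_forall fun k => hα k ▸ angle_le_pi _ _)
    have hsαl : 0 < Real.sin αl := by
      rcases hαl_le_pi.lt_or_eq with h | h
      · exact Real.sin_pos_of_pos_of_lt_pi hαl0 h
      · exfalso
        have hs0 : Real.sin αl = 0 := by rw [h, Real.sin_pi]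
        have hnt := hdiverge hs0
        have hct : Tendsto (fun k => Real.cos (α k)) atTop (nhds (-1)) := by
          have := (Real.continuous_cos.tendsto αl).comp hαl
          rwa [h, Real.cos_pi] at this
        have hcbot : Tendsto c atTop atBot := by
          have := hnt.atTop_mul_neg (by norm_num : (-1 : ℝ) < 0) hct
          refine this.congr fun k => (hcos k).symm
        obtain ⟨k, hk⟩ := (hcbot.eventually (eventually_lt_atBot (c 0))).exists
        exact absurd (hcmono (Nat.zero_le k)) (not_le.mpr hk)
    have hsint : Tendsto (fun k => Real.sin (α k)) atTop (nhds (Real.sin αl)) :=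
      (Real.continuous_sin.tendsto αl).comp hαl
    have hnt : Tendsto (fun k => ‖p k‖) atTop (nhds (R / Real.sin αl)) := by
      have := (tendsto_const_nhds (x := R) (f := atTop (α := ℕ))).div hsint hsαl.ne'
      exact this.congr fun k => (hnorm_eq k).symm
    obtain ⟨C, hC⟩ := hnt.bddAbove_range
    have hC' : ∀ k, ‖p k‖ ≤ C := fun k => hC ⟨k, rfl⟩
    have hsum_eq : ∀ N, ∑ i ∈ Finset.range N, e i = c N - c 0 := by
      intro N
      induction N with
      | zero => simp
      | succ N ih => rw [Finset.sum_range_succ, ih, hckey N]; ring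
    have hsummable : Summable e := by
      refine summable_of_sum_range_le (c := C - (c 0 : ℝ)) (fun k => (he_pos k).le) fun N => ?_
      rw [hsum_eq N]
      have h1 : c N ≤ ‖p N‖ := by
        have := real_inner_le_norm (p N) (v N)
        rwa [hvnorm N, mul_one] at this
      linarith [hC' N]
    have hcauchy : CauchySeq p := by
      refine cauchySeq_of_summable_dist (hsummable.congr fun k => ?_)
      rw [he, dist_eq_norm, norm_sub_rev]
    obtain ⟨plim, hplim⟩ := cauchySeq_tendsto_of_complete hcauchy
    refine ⟨plim, ?_, hplim⟩
    have hnlim : Tendsto (fun k => ‖p k‖) atTop (nhds ‖plim‖) :=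
      (continuous_norm.tendsto plim).comp hplim
    have heq : ‖plim‖ = R / Real.sin αl := tendsto_nhds_unique hnlim hnt
    have : 0 < ‖plim‖ := by rw [heq]; positivity
    exact norm_pos_iff.mp this
  · intro h0
    exact hdiverge (by rw [h0, Real.sin_zero])
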